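/- Let (y_k)_{k≥0} be a strictly decreasing sequence of positive real numbers converging to 0, let η > 1, and assume there exists ρ ≥ 1 with (1/ρ) · y_k^η ≤ y_k − y_{k+1} ≤ ρ · y_k^η for all k ≥ 0. Then for S = {y_k : k ≥ 0} ⊂ ℝ one has lim_{ε→0⁺} log|S_ε| / log ε = 1/η; i.e., the Minkowski dimension of S equals (η−1)/η. -/

import Mathlib

open MeasureTheory Set Filter Topology

set_option linter.unusedVariables false
set_option linter.deprecated false


private lemma rpow_convex_step {a b η : ℝ} (hb : 0 < b) (hba : b < a) (hη : 1 < η) :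
    a ^ (1-η) + (η-1) * a ^ (-η) * (a - b) ≤ b ^ (1-η) := by
  have ha : 0 < a := hb.trans hba
  have hA : a ^ (-η) * a = a ^ (1-η) := by
    calc a ^ (-η) * a = a ^ (-η) * a ^ (1:ℝ) := by rw [Real.rpow_one]
    _ = a ^ (-η + 1) := (Real.rpow_add ha _ _).symm
    _ = a ^ (1-η) := by ring_nf
  have hlog : Real.log b - Real.log a ≤ b / a - 1 := by
    have h := Real.log_le_sub_one_of_pos (show 0 < b/a by positivity)
    rwa [Real.log_div hb.ne' ha.ne'] at h
  have hexp : 1 + (1-η) * (Real.log b - Real.log a)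
      ≤ Real.exp ((1-η)*(Real.log b - Real.log a)) := by
    have := Real.add_one_le_exp ((1-η)*(Real.log b - Real.log a)); linarith
  have h1 : (η - 1) * (a - b) / a ≤ (1-η) * (Real.log b - Real.log a) := by
    have h2 : (1-η) * (Real.log b - Real.log a) ≥ (1-η) * (b/a - 1) :=
      mul_le_mul_of_nonpos_left hlog (by linarith)
    have h3 : (η-1)*(a-b)/a = (1-η)*(b/a-1) := by field_simp; ring
    linarith
  have hbr : b ^ (1-η) = a^(1-η) * Real.exp ((1-η)*(Real.log b - Real.log a)) := by
    rw [Real.rpow_def_of_pos hb, Real.rpow_def_of_pos ha, ← Real.exp_add]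
    congr 1; ring
  have hpos : 0 < a ^ (1-η) := Real.rpow_pos_of_pos ha _
  calc a^(1-η) + (η-1)*a^(-η)*(a-b)
      = a^(1-η) * (1 + (η-1)*(a-b)/a) := by
        rw [← hA]; field_simp
    _ ≤ a^(1-η) * (1 + (1-η)*(Real.log b - Real.log a)) := by nlinarith
    _ ≤ a^(1-η) * Real.exp ((1-η)*(Real.log b - Real.log a)) := by nlinarith
    _ = b ^(1-η) := hbr.symm

private lemma telescope {ys : ℕ → ℝ} {η ρ : ℝ}
    (hpos : ∀ k, 0 < ys k) (hanti : StrictAnti ys) (hη : 1 < η) (hρ : 1 ≤ ρ)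
    (hcomp : ∀ k, (1/ρ) * ys k ^ η ≤ ys k - ys (k+1)) :
    ∀ N : ℕ, (N : ℝ) * ((η-1)/ρ) ≤ ys N ^ (1-η) := by
  intro N
  induction N with
  | zero =>
    simp only [Nat.cast_zero, zero_mul]
    exact (Real.rpow_pos_of_pos (hpos 0) _).le
  | succ n ih =>
    have h1 : ys n ^ (1-η) + (η-1) * ys n ^(-η) * (ys n - ys (n+1)) ≤ ys (n+1) ^ (1-η) :=
      rpow_convex_step (hpos _) (hanti (Nat.lt_succ_self n)) hη
    have hinv : ys n ^ (-η) * ys n ^ η = 1 := by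
      rw [← Real.rpow_add (hpos n)]; simp
    have h2 : (η-1)/ρ ≤ (η-1) * ys n ^(-η) * (ys n - ys (n+1)) := by
      have hg := hcomp n
      have hnn : (0:ℝ) ≤ (η-1) * ys n ^(-η) := by
        have := Real.rpow_pos_of_pos (hpos n) (-η); nlinarith
      have h3 : (η-1) * ys n^(-η) * ((1/ρ) * ys n ^ η) ≤ (η-1) * ys n ^(-η) * (ys n - ys (n+1)) :=
        mul_le_mul_of_nonneg_left hg hnn
      have h4 : (η-1) * ys n^(-η) * ((1/ρ) * ys n ^ η) = (η-1)/ρ := by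
        calc (η-1) * ys n^(-η) * ((1/ρ) * ys n ^ η)
            = (η-1) * (1/ρ) * (ys n^(-η) * ys n ^ η) := by ring
          _ = (η-1)/ρ := by rw [hinv]; ring
      linarith
    push_cast
    linarith

private lemma half_step {ys : ℕ → ℝ} {η ρ : ℝ} (hpos : ∀ k, 0 < ys k) (hη : 1 < η)
    (k : ℕ) (hub : ys k - ys (k+1) ≤ ρ * ys k ^ η) (hsmall : ρ * ys k ^ (η-1) ≤ 1/2) :
    ys k / 2 ≤ ys (k+1) := by
  have hsplit : ys k ^ η = ys k ^ (η-1) * ys k := by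
    calc ys k ^ η = ys k ^ ((η-1)+1) := by ring_nf
    _ = ys k ^(η-1) * ys k ^ (1:ℝ) := Real.rpow_add (hpos k) _ _
    _ = ys k ^(η-1) * ys k := by rw [Real.rpow_one]
  have h1 : ρ * ys k ^ η ≤ (1/2) * ys k := by
    rw [hsplit, ← mul_assoc]
    exact mul_le_mul_of_nonneg_right hsmall (hpos k).le
  linarith

private lemma thick_subset {ys : ℕ → ℝ} (hpos : ∀ k, 0 < ys k) (hanti : StrictAnti ys)
    {ε : ℝ} :
    Metric.thickening ε (Set.range ys) ⊆ Set.Ioo (-ε) (ys 0 + ε) := by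
  intro x hx
  rw [Metric.mem_thickening_iff] at hx
  obtain ⟨z, ⟨k, rfl⟩, hd⟩ := hx
  rw [Real.dist_eq] at hd
  have h := abs_lt.mp hd
  have h0 : ys k ≤ ys 0 := hanti.antitone (Nat.zero_le k)
  exact ⟨by linarith [hpos k], by linarith⟩

private lemma vol_ne_top {ys : ℕ → ℝ} (hpos : ∀ k, 0 < ys k) (hanti : StrictAnti ys)
    {ε : ℝ} : volume (Metric.thickening ε (Set.range ys)) ≠ ⊤ :=
  ((measure_mono (thick_subset hpos hanti)).trans_lt
    (by rw [Real.volume_Ioo]; exact ENNReal.ofReal_lt_top)).ne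

private lemma vol_bounds {ys : ℕ → ℝ} {η ρ : ℝ}
    (hpos : ∀ k, 0 < ys k) (hanti : StrictAnti ys)
    (hlim : Filter.Tendsto ys Filter.atTop (nhds 0))
    (hη : 1 < η) (hρ : 1 ≤ ρ)
    (hcomp : ∀ k : ℕ, (1/ρ) * ys k ^ η ≤ ys k - ys (k+1) ∧ ys k - ys (k+1) ≤ ρ * ys k ^ η) :
    ∃ c C ε₀ : ℝ, 0 < c ∧ 0 < C ∧ 0 < ε₀ ∧ ε₀ ≤ 1 ∧ ∀ ε : ℝ, 0 < ε → ε < ε₀ →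
      c * ε ^ (1/η) ≤ (volume (Metric.thickening ε (Set.range ys))).toReal ∧
      (volume (Metric.thickening ε (Set.range ys))).toReal ≤ C * ε ^ (1/η) := by
  have hρ0 : (0:ℝ) < ρ := lt_of_lt_of_le one_pos hρ
  have hη0 : (0:ℝ) < η := by linarith
  obtain ⟨k₀, hk₀⟩ : ∃ k₀, ∀ k, k₀ ≤ k → ρ * ys k ^ (η-1) ≤ 1/2 := by
    have hδ : (0:ℝ) < ((2*ρ)⁻¹) ^ ((η-1)⁻¹) := Real.rpow_pos_of_pos (by positivity) _
    obtain ⟨k₀, hk₀⟩ := (hlim.eventually (gt_mem_nhds hδ)).exists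
    refine ⟨k₀, fun k hk => ?_⟩
    have h1 : ys k < ((2*ρ)⁻¹) ^ ((η-1)⁻¹) := lt_of_le_of_lt (hanti.antitone hk) hk₀
    have h2 : ys k ^ (η-1) ≤ (((2*ρ)⁻¹) ^ ((η-1)⁻¹)) ^ (η-1) :=
      Real.rpow_le_rpow (hpos k).le h1.le (by linarith)
    rw [← Real.rpow_mul (by positivity : (0:ℝ) ≤ (2*ρ)⁻¹),
      inv_mul_cancel₀ (by intro h; apply absurd h; intro h'; linarith : η - 1 ≠ 0),
      Real.rpow_one] at h2
    have h3 : ρ * ys k ^ (η-1) ≤ ρ * (2*ρ)⁻¹ := mul_le_mul_of_nonneg_left h2 hρ0.le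
    have h4 : ρ * (2*ρ)⁻¹ = 1/2 := by field_simp
    linarith
  have hy0 : 0 < ys k₀ := hpos k₀
  set c : ℝ := ρ ^ (-(1/η)) / 2 with hcdef
  have hc : 0 < c := by
    have := Real.rpow_pos_of_pos hρ0 (-(1/η)); positivity
  set C : ℝ := 4 + (2*ρ/(η-1)) * c ^ (1-η) with hCdef
  have hC : 0 < C := by
    have h1 := Real.rpow_pos_of_pos hc (1-η)
    have h2 : 0 < 2*ρ/(η-1) := by
      apply div_pos (by linarith) (by linarith)
    have h3 := mul_pos h2 h1
    rw [hCdef]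
    linarith
  refine ⟨c, C, min 1 (ρ * ys k₀ ^ η / 2), hc, hC, ?_, min_le_left _ _, ?_⟩
  · have : 0 < ρ * ys k₀ ^ η / 2 := by positivity
    exact lt_min one_pos this
  intro ε hε hεlt
  have hε1 : ε < 1 := lt_of_lt_of_le hεlt (min_le_left _ _)
  have hεk : ε < ρ * ys k₀ ^ η / 2 := lt_of_lt_of_le hεlt (min_le_right _ _)
  -- N := first index with small scale
  have hex : ∃ k, ρ * ys k ^ η < 2*ε := by
    have hm : (0:ℝ) < min 1 (2*ε/ρ) := lt_min one_pos (by positivity)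
    obtain ⟨k, hk⟩ := (hlim.eventually (gt_mem_nhds hm)).exists
    refine ⟨k, ?_⟩
    have h1 : ys k < 1 := lt_of_lt_of_le hk (min_le_left _ _)
    have h2 : ys k < 2*ε/ρ := lt_of_lt_of_le hk (min_le_right _ _)
    have h3 : ys k ^ η ≤ ys k := by
      calc ys k ^ η ≤ ys k ^ (1:ℝ) :=
            Real.rpow_le_rpow_of_exponent_ge (hpos k) h1.le hη.le
      _ = ys k := Real.rpow_one _
    have h4 : ρ * ys k < 2*ε := by
      have := (lt_div_iff₀ hρ0).mp h2
      linarith [mul_comm ρ (ys k)]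
    nlinarith
  set N := Nat.find hex with hNdef
  have hN : ρ * ys N ^ η < 2*ε := Nat.find_spec hex
  have hNmin : ∀ k, k < N → 2*ε ≤ ρ * ys k ^ η := fun k hk => not_lt.mp (Nat.find_min hex hk)
  have hk₀N : k₀ < N := by
    by_contra h
    push_neg at h
    have h1 : ys k₀ ≤ ys N := hanti.antitone h
    have h2 : ys k₀ ^ η ≤ ys N ^ η := Real.rpow_le_rpow (hpos _).le h1 hη0.le
    nlinarith
  obtain ⟨n, hn⟩ : ∃ n, N = n + 1 := ⟨N-1, by omega⟩
  have hk₀n : k₀ ≤ n := by omega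
  have hgapn : 2*ε ≤ ρ * ys n ^ η := hNmin n (by omega)
  have hhalf : ys n / 2 ≤ ys N := by
    rw [hn]; exact half_step hpos hη n (hcomp n).2 (hk₀ n hk₀n)
  have hysn : (2*ε/ρ) ^ (1/η) ≤ ys n := by
    have h1 : 2*ε/ρ ≤ ys n ^ η := (div_le_iff₀ hρ0).mpr (by linarith [mul_comm ρ (ys n ^ η)])
    have h2 := Real.rpow_le_rpow (by positivity) h1 (by positivity : (0:ℝ) ≤ 1/η)
    rwa [← Real.rpow_mul (hpos n).le, mul_one_div_cancel (ne_of_gt hη0), Real.rpow_one] at h2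
  have hlowN : c * ε ^ (1/η) ≤ ys N := by
    have h1 : (ε/ρ) ^ (1/η) ≤ (2*ε/ρ)^(1/η) :=
      Real.rpow_le_rpow (by positivity) ((div_le_div_iff_of_pos_right hρ0).mpr (by linarith)) (by positivity)
    have h2 : (ε/ρ)^(1/η) = ε^(1/η) * ρ^(-(1/η)) := by
      rw [Real.div_rpow hε.le hρ0.le, Real.rpow_neg hρ0.le, div_eq_mul_inv]
    calc c * ε^(1/η) = (ε^(1/η) * ρ^(-(1/η)))/2 := by rw [hcdef]; ring
    _ = (ε/ρ)^(1/η) / 2 := by rw [h2]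
    _ ≤ (2*ε/ρ)^(1/η)/2 := by linarith
    _ ≤ ys n / 2 := by linarith
    _ ≤ ys N := hhalf
    -- lower measure bound
  have hsub : Set.Ioo 0 (ys N) ⊆ Metric.thickening ε (Set.range ys) := by
    intro x hx
    obtain ⟨hx0, hxN⟩ := hx
    have hex2 : ∃ j, ys j < x := (hlim.eventually (gt_mem_nhds hx0)).exists
    have hK : ys (Nat.find hex2) < x := Nat.find_spec hex2
    have hKN : N < Nat.find hex2 := by
      by_contra h
      push_neg at h
      have := hanti.antitone h
      linarith
    obtain ⟨m, hm⟩ : ∃ m, Nat.find hex2 = m + 1 := ⟨Nat.find hex2 - 1, by omega⟩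
    have hmx : x ≤ ys m := not_lt.mp (Nat.find_min hex2 (by omega))
    have hym : ys m ≤ ys N := hanti.antitone (by omega)
    have hgap : ys m - ys (m+1) < 2*ε := by
      have h1 : ys m ^ η ≤ ys N ^ η := Real.rpow_le_rpow (hpos m).le hym hη0.le
      have h2 := (hcomp m).2
      nlinarith
    rw [Metric.mem_thickening_iff]
    rcases lt_or_ge (x - ys (m+1)) ε with h | h
    · refine ⟨ys (m+1), ⟨m+1, rfl⟩, ?_⟩
      rw [Real.dist_eq, abs_of_nonneg (by rw [← hm]; linarith)]
      exact h
    · refine ⟨ys m, ⟨m, rfl⟩, ?_⟩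
      rw [Real.dist_eq, abs_of_nonpos (by linarith)]
      linarith
  have hfin := vol_ne_top hpos hanti (ε := ε)
  have hlower : c * ε^(1/η) ≤ (volume (Metric.thickening ε (Set.range ys))).toReal := by
    have h1 : volume (Set.Ioo 0 (ys N)) ≤ volume (Metric.thickening ε (Set.range ys)) :=
      measure_mono hsub
    rw [Real.volume_Ioo, sub_zero] at h1
    have h2 := ENNReal.toReal_mono hfin h1
    rw [ENNReal.toReal_ofReal (hpos N).le] at h2
    linarith
  -- upper bound on N
  have hNle : (N:ℝ) ≤ ρ/(η-1) * (c * ε^(1/η))^(1-η) := by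
    have h1 := telescope hpos hanti hη hρ (fun k => (hcomp k).1) N
    have h2 : ys N ^ (1-η) ≤ (c * ε^(1/η))^(1-η) :=
      Real.rpow_le_rpow_of_nonpos (by positivity) hlowN (by linarith)
    have h3 : (0:ℝ) < (η-1)/ρ := div_pos (by linarith) hρ0
    have h4 : (N:ℝ) ≤ (c*ε^(1/η))^(1-η) / ((η-1)/ρ) := (le_div_iff₀ h3).mpr (by linarith)
    calc (N:ℝ) ≤ (c*ε^(1/η))^(1-η) / ((η-1)/ρ) := h4
    _ = ρ/(η-1) * (c * ε^(1/η))^(1-η) := by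
        field_simp
  have hysNup : ys N ≤ 2 * ε^(1/η) := by
    have h0 := Real.rpow_pos_of_pos (hpos N) η
    have h1 : ys N ^ η ≤ 2*ε := by
      have h1' : 1 * ys N ^ η ≤ ρ * ys N ^ η := mul_le_mul_of_nonneg_right hρ h0.le
      linarith
    have h2 : ys N ≤ (2*ε)^(1/η) := by
      have h := Real.rpow_le_rpow h0.le h1 (by positivity : (0:ℝ) ≤ 1/η)
      rwa [← Real.rpow_mul (hpos N).le, mul_one_div_cancel (ne_of_gt hη0), Real.rpow_one] at h
    have h3 : (2*ε)^(1/η) = 2^(1/η) * ε^(1/η) := Real.mul_rpow (by norm_num) hε.le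
    have h4 : (2:ℝ)^(1/η) ≤ 2 := by
      calc (2:ℝ)^(1/η) ≤ 2^(1:ℝ) :=
            Real.rpow_le_rpow_of_exponent_le one_le_two (by rw [div_le_one hη0]; linarith)
      _ = 2 := Real.rpow_one 2
    have h5 : (0:ℝ) ≤ ε^(1/η) := by positivity
    have h6 : (2:ℝ)^(1/η) * ε^(1/η) ≤ 2 * ε^(1/η) := mul_le_mul_of_nonneg_right h4 h5
    rw [h3] at h2
    linarith
  have hεle : ε ≤ ε^(1/η) := by
    calc ε = ε^(1:ℝ) := (Real.rpow_one ε).symm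
    _ ≤ ε^(1/η) := Real.rpow_le_rpow_of_exponent_ge hε hε1.le (by rw [div_le_one hη0]; linarith)
  have hNεle : (N:ℝ) * (2*ε) ≤ ((2*ρ/(η-1)) * c^(1-η)) * ε^(1/η) := by
    have h1 : (c * ε^(1/η))^(1-η) = c^(1-η) * ε^((1/η)*(1-η)) := by
      rw [Real.mul_rpow hc.le (by positivity), ← Real.rpow_mul hε.le]
    have h2 : ε * ε^((1/η)*(1-η)) = ε^(1/η) := by
      calc ε * ε^((1/η)*(1-η)) = ε^(1:ℝ) * ε^((1/η)*(1-η)) := by rw [Real.rpow_one]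
      _ = ε^(1 + (1/η)*(1-η)) := (Real.rpow_add hε _ _).symm
      _ = ε^(1/η) := by
          congr 1
          field_simp
          ring
    calc (N:ℝ) * (2*ε) ≤ (ρ/(η-1) * (c*ε^(1/η))^(1-η)) * (2*ε) :=
          mul_le_mul_of_nonneg_right hNle (by positivity)
    _ = ((2*ρ/(η-1)) * c^(1-η)) * (ε * ε^((1/η)*(1-η))) := by rw [h1]; ring
    _ = ((2*ρ/(η-1)) * c^(1-η)) * ε^(1/η) := by rw [h2]
  -- measure upper bound
  have hsub2 : Metric.thickening ε (Set.range ys) ⊆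
      Set.Ioo (-ε) (ys N + ε) ∪ ⋃ k ∈ Finset.range N, Set.Ioo (ys k - ε) (ys k + ε) := by
    intro x hx
    rw [Metric.mem_thickening_iff] at hx
    obtain ⟨z, ⟨k, rfl⟩, hd⟩ := hx
    rw [Real.dist_eq] at hd
    have h := abs_lt.mp hd
    rcases lt_or_ge k N with hk | hk
    · right
      exact Set.mem_biUnion (Finset.mem_range.mpr hk) ⟨by linarith, by linarith⟩
    · left
      have : ys k ≤ ys N := hanti.antitone hk
      exact ⟨by linarith [hpos k], by linarith⟩
  have hvol2 : volume (Metric.thickening ε (Set.range ys)) ≤ ENNReal.ofReal (C * ε^(1/η)) := by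
    have hcast : (N : ENNReal) * ENNReal.ofReal (2*ε) = ENNReal.ofReal ((N:ℝ) * (2*ε)) := by
      rw [ENNReal.ofReal_mul (Nat.cast_nonneg N), ENNReal.ofReal_natCast]
    calc volume (Metric.thickening ε (Set.range ys))
        ≤ volume (Set.Ioo (-ε) (ys N + ε))
          + volume (⋃ k ∈ Finset.range N, Set.Ioo (ys k - ε) (ys k + ε)) :=
          le_trans (measure_mono hsub2) (measure_union_le _ _)
    _ ≤ ENNReal.ofReal (ys N + 2*ε)
          + ∑ k ∈ Finset.range N, volume (Set.Ioo (ys k - ε) (ys k + ε)) := by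
        rw [Real.volume_Ioo]
        refine add_le_add ?_ (measure_biUnion_finset_le _ _)
        apply le_of_eq
        congr 1
        ring
    _ = ENNReal.ofReal (ys N + 2*ε) + ∑ k ∈ Finset.range N, ENNReal.ofReal (2*ε) := by
        congr 1
        refine Finset.sum_congr rfl fun k _ => ?_
        rw [Real.volume_Ioo]
        congr 1
        ring
    _ = ENNReal.ofReal (ys N + 2*ε) + ENNReal.ofReal ((N:ℝ) * (2*ε)) := by
        rw [Finset.sum_const, Finset.card_range, nsmul_eq_mul, hcast]
    _ = ENNReal.ofReal ((ys N + 2*ε) + (N:ℝ) * (2*ε)) :=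
        (ENNReal.ofReal_add (add_nonneg (hpos N).le (by positivity)) (by positivity)).symm
    _ ≤ ENNReal.ofReal (C * ε^(1/η)) := by
        apply ENNReal.ofReal_le_ofReal
        have h5 : (0:ℝ) ≤ ε^(1/η) := by positivity
        rw [hCdef]
        linarith
  have hupper : (volume (Metric.thickening ε (Set.range ys))).toReal ≤ C * ε^(1/η) :=
    ENNReal.toReal_le_of_le_ofReal (mul_nonneg hC.le (Real.rpow_nonneg hε.le _)) hvol2
  exact ⟨hlower, hupper⟩

theorem minkowski_dimension_of_comparable_sequence
    (ys : ℕ → ℝ) (η ρ : ℝ)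
    (hpos : ∀ k, 0 < ys k) (hanti : StrictAnti ys)
    (hlim : Filter.Tendsto ys Filter.atTop (nhds 0))
    (hη : 1 < η) (hρ : 1 ≤ ρ)
    (hcomp : ∀ k : ℕ,
      (1/ρ) * ys k ^ η ≤ ys k - ys (k+1) ∧
      ys k - ys (k+1) ≤ ρ * ys k ^ η) :
    Filter.Tendsto
      (fun ε : ℝ =>
        Real.log (volume (Metric.thickening ε (Set.range ys))).toReal /
          Real.log ε)
      (nhdsWithin 0 (Set.Ioi 0)) (nhds (1/η)) := by
  obtain ⟨c, C, ε₀, hc, hC, hε₀, hε₀1, hbound⟩ := vol_bounds hpos hanti hlim hη hρ hcomp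
  have hη0 : (0:ℝ) < η := by linarith
  have hmem : Set.Ioo (0:ℝ) ε₀ ∈ nhdsWithin (0:ℝ) (Set.Ioi 0) :=
    Ioo_mem_nhdsGT_of_mem ⟨le_refl 0, hε₀⟩
  have hinv : Tendsto (fun ε : ℝ => (Real.log ε)⁻¹) (nhdsWithin 0 (Set.Ioi 0)) (nhds 0) := by
    have h1 : Tendsto (fun ε : ℝ => -Real.log ε) (nhdsWithin 0 (Set.Ioi 0)) atTop :=
      tendsto_neg_atTop_iff.mpr Real.tendsto_log_nhdsGT_zero
    have h2 := h1.inv_tendsto_atTop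
    have h3 : (fun ε : ℝ => -(-Real.log ε)⁻¹) = fun ε : ℝ => (Real.log ε)⁻¹ := by
      funext ε; rw [inv_neg, neg_neg]
    have h4 := h2.neg
    rw [neg_zero] at h4
    exact h3 ▸ h4
  have htC : Tendsto (fun ε : ℝ => Real.log C * (Real.log ε)⁻¹ + 1/η)
      (nhdsWithin 0 (Set.Ioi 0)) (nhds (1/η)) := by
    have := (hinv.const_mul (Real.log C)).add_const (1/η)
    simpa using this
  have htc : Tendsto (fun ε : ℝ => Real.log c * (Real.log ε)⁻¹ + 1/η)
      (nhdsWithin 0 (Set.Ioi 0)) (nhds (1/η)) := by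
    have := (hinv.const_mul (Real.log c)).add_const (1/η)
    simpa using this
  refine tendsto_of_tendsto_of_tendsto_of_le_of_le' htC htc ?_ ?_
  · filter_upwards [hmem] with ε hε
    obtain ⟨hl, hu⟩ := hbound ε hε.1 hε.2
    have hε1 : ε < 1 := lt_of_lt_of_le hε.2 hε₀1
    have hlogneg : Real.log ε < 0 := Real.log_neg hε.1 hε1
    have hrp : (0:ℝ) < ε ^ (1/η) := Real.rpow_pos_of_pos hε.1 _
    have hVpos : 0 < (volume (Metric.thickening ε (Set.range ys))).toReal :=
      lt_of_lt_of_le (by positivity) hl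
    have h1 : Real.log (volume (Metric.thickening ε (Set.range ys))).toReal
        ≤ Real.log (C * ε^(1/η)) :=
      (Real.log_le_log_iff hVpos (by positivity)).mpr hu
    rw [Real.log_mul (ne_of_gt hC) (ne_of_gt hrp), Real.log_rpow hε.1] at h1
    have heq : Real.log C * (Real.log ε)⁻¹ + 1/η
        = (Real.log C + 1/η * Real.log ε) / Real.log ε := by
      rw [eq_div_iff hlogneg.ne, add_mul, mul_assoc, inv_mul_cancel₀ hlogneg.ne, mul_one]
    rw [heq]
    exact (div_le_div_right_of_neg hlogneg).mpr h1
  · filter_upwards [hmem] with ε hε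
    obtain ⟨hl, hu⟩ := hbound ε hε.1 hε.2
    have hε1 : ε < 1 := lt_of_lt_of_le hε.2 hε₀1
    have hlogneg : Real.log ε < 0 := Real.log_neg hε.1 hε1
    have hrp : (0:ℝ) < ε ^ (1/η) := Real.rpow_pos_of_pos hε.1 _
    have h1 : Real.log (c * ε^(1/η))
        ≤ Real.log (volume (Metric.thickening ε (Set.range ys))).toReal :=
      (Real.log_le_log_iff (by positivity) (lt_of_lt_of_le (by positivity) hl)).mpr hl
    rw [Real.log_mul (ne_of_gt hc) (ne_of_gt hrp), Real.log_rpow hε.1] at h1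
    have heq : Real.log c * (Real.log ε)⁻¹ + 1/η
        = (Real.log c + 1/η * Real.log ε) / Real.log ε := by
      rw [eq_div_iff hlogneg.ne, add_mul, mul_assoc, inv_mul_cancel₀ hlogneg.ne, mul_one]
    rw [heq]
    exact (div_le_div_right_of_neg hlogneg).mpr h1
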